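/- Let β, λ, σ > 0, r < 0 and 0 < Δ < 1 with Δ = 1 + (27r/(2σ))λ². Then f'(X₋) > 0 and f'(X₊) < 0, where X_± = (4|r|/3)/(1 ∓ √Δ); hence X₋ is an unstable and X₊ a stable equilibrium of dX/dt = f(X). -/

import Mathlib

noncomputable def iceDrift (β lam σ r X : ℝ) : ℝ :=
  -(β * lam / Real.sqrt (2 * σ)) * ((3 / 4) * X ^ ((3:ℝ)/2) - r * X ^ ((1:ℝ)/2))
    + (1 / 3) * β * X

lemma deriv_iceDrift (β lam σ r X : ℝ) (hX : 0 < X) :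
    deriv (iceDrift β lam σ r) X
      = -(β * lam / Real.sqrt (2 * σ)) * ((9/8) * Real.sqrt X - r / (2 * Real.sqrt X))
        + (1/3) * β := by
  have h32 : HasDerivAt (fun x : ℝ => x ^ ((3:ℝ)/2)) (((3:ℝ)/2) * X ^ ((3:ℝ)/2 - 1)) X :=
    Real.hasDerivAt_rpow_const (Or.inl hX.ne')
  have h12 : HasDerivAt (fun x : ℝ => x ^ ((1:ℝ)/2)) (((1:ℝ)/2) * X ^ ((1:ℝ)/2 - 1)) X :=
    Real.hasDerivAt_rpow_const (Or.inl hX.ne')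
  have h : HasDerivAt (fun x : ℝ =>
      -(β * lam / Real.sqrt (2 * σ)) * ((3 / 4) * x ^ ((3:ℝ)/2) - r * x ^ ((1:ℝ)/2))
        + (1 / 3) * β * x)
      (-(β * lam / Real.sqrt (2 * σ)) *
        ((3/4) * (((3:ℝ)/2) * X ^ ((3:ℝ)/2 - 1)) - r * (((1:ℝ)/2) * X ^ ((1:ℝ)/2 - 1)))
        + (1/3) * β * 1) X :=
    (((h32.const_mul ((3:ℝ)/4)).sub (h12.const_mul r)).const_mul
      (-(β * lam / Real.sqrt (2 * σ)))).add ((hasDerivAt_id X).const_mul ((1/3) * β))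
  unfold iceDrift
  rw [h.deriv]
  have e1 : ((3:ℝ)/2 - 1) = (1:ℝ)/2 := by norm_num
  have e2 : ((1:ℝ)/2 - 1) = -((1:ℝ)/2) := by norm_num
  have hs : X ^ ((1:ℝ)/2) = Real.sqrt X := (Real.sqrt_eq_rpow X).symm
  have hneg : X ^ (-((1:ℝ)/2)) = (Real.sqrt X)⁻¹ := by
    rw [Real.rpow_neg hX.le, hs]
  rw [e1, e2, hs, hneg]
  have hts : (0:ℝ) < Real.sqrt X := Real.sqrt_pos.mpr hX
  field_simp
  ring

theorem stability_of_equilibria (β lam σ r : ℝ) (hβ : 0 < β) (hlam : 0 < lam)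
    (hσ : 0 < σ) (hr : r < 0)
    (Δ : ℝ) (hΔdef : Δ = 1 + (27 * r / (2 * σ)) * lam ^ 2)
    (hΔpos : 0 < Δ) (hΔlt : Δ < 1) :
    0 < deriv (iceDrift β lam σ r) ((4 * |r| / 3) / (1 + Real.sqrt Δ)) ∧
    deriv (iceDrift β lam σ r) ((4 * |r| / 3) / (1 - Real.sqrt Δ)) < 0 := by
  have ha : |r| = -r := abs_of_neg hr
  set s := Real.sqrt Δ with hsdef
  have hs0 : 0 < s := Real.sqrt_pos.mpr hΔpos
  have hs1 : s < 1 := by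
    rw [hsdef, show (1:ℝ) = Real.sqrt 1 by simp]
    exact Real.sqrt_lt_sqrt hΔpos.le hΔlt
  have hss : s ^ 2 = Δ := Real.sq_sqrt hΔpos.le
  set a := -r with hadef
  have ha0 : 0 < a := neg_pos.mpr hr
  have hra : r = -a := by rw [hadef]; ring
  have h2σ : (0:ℝ) < 2 * σ := by linarith
  have hsq2σ : Real.sqrt (2*σ) ^ 2 = 2*σ := Real.sq_sqrt h2σ.le
  have hsqσpos : 0 < Real.sqrt (2*σ) := Real.sqrt_pos.mpr h2σ
  set k := lam / Real.sqrt (2*σ) with hkdef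
  have hk0 : 0 < k := div_pos hlam hsqσpos
  have hk2 : k ^ 2 * (27 * a) = 1 - s ^ 2 := by
    have hk2' : k ^ 2 = lam ^ 2 / (2*σ) := by rw [hkdef, div_pow, hsq2σ]
    rw [hk2', hss, hΔdef, hadef]
    field_simp
    ring
  have hbl : β * lam / Real.sqrt (2 * σ) = β * k := by rw [hkdef]; ring
  clear_value s a k
  constructor
  · -- unstable branch: X₋
    have hd : (0:ℝ) < 1 + s := by linarith
    have hX0 : 0 < (4 * |r| / 3) / (1 + s) := by
      rw [ha]; positivity
    rw [deriv_iceDrift _ _ _ _ _ hX0, hbl]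
    set X := (4 * |r| / 3) / (1 + s) with hXdef
    set t := Real.sqrt X with htdef
    have ht0 : 0 < t := Real.sqrt_pos.mpr hX0
    have ht2 : t ^ 2 = X := Real.sq_sqrt hX0.le
    have hX3 : 3 * (1 + s) * X = 4 * a := by
      rw [hXdef, ha]; field_simp
    set Y := (9/8) * X + a/2 with hYdef
    have hY0 : 0 < Y := by positivity
    clear_value X t Y
    have e3 : (1 + s) * Y = a * (4 + s) / 2 := by
      rw [hYdef]; linear_combination (3/8) * hX3
    have key : 3 * (k * Y) < t := by
      apply lt_of_pow_lt_pow_left₀ 2 ht0.le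
      rw [ht2]
      have hc : (0:ℝ) < 81 * a * (1 + s)^3 := by positivity
      rw [← mul_lt_mul_iff_of_pos_right hc]
      have l1 : (3 * (k * Y))^2 * (81 * a * (1 + s)^3)
          = 27 * (1 - s^2) * (1 + s) * (a * (4 + s) / 2)^2 := by
        linear_combination (27 * Y^2 * (1+s)^3) * hk2
          + (27 * (1 - s^2) * (1+s) * ((1+s)*Y + a*(4+s)/2)) * e3
      have l2 : X * (81 * a * (1 + s)^3) = 108 * a^2 * (1 + s)^2 := by
        linear_combination (27 * a * (1+s)^2) * hX3
      rw [l1, l2]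
      have hid : 108*a^2*(1+s)^2 - 27*(1-s^2)*(1+s)*(a*(4+s)/2)^2
          = (27/4)*(a^2*(1+s)^2)*(s*(8+7*s+s^2)) := by ring
      have hp1 : 0 < s*(8+7*s+s^2) :=
        mul_pos hs0 (by linarith only [sq_nonneg s, hs0])
      have hp2 : 0 < (27/4)*(a^2*(1+s)^2)*(s*(8+7*s+s^2)) :=
        mul_pos (by positivity) hp1
      linarith only [hid, hp2]
    have e4 : (9/8) * t - r / (2 * t) = Y / t := by
      rw [hra, hYdef, ← ht2]
      field_simp
      ring
    rw [e4]
    have h5 : k * Y / t < 1/3 := by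
      rw [div_lt_iff₀ ht0]; linarith only [key]
    have h6 : β * (k * Y / t) < β * (1/3) := mul_lt_mul_of_pos_left h5 hβ
    have h7 : -(β * k) * (Y / t) + 1/3 * β = β * (1/3) - β * (k * Y / t) := by ring
    rw [h7]
    linarith only [h6]
  · -- stable branch: X₊
    have hd : (0:ℝ) < 1 - s := by linarith
    have hX0 : 0 < (4 * |r| / 3) / (1 - s) := by
      rw [ha]; positivity
    rw [deriv_iceDrift _ _ _ _ _ hX0, hbl]
    set X := (4 * |r| / 3) / (1 - s) with hXdef
    set t := Real.sqrt X with htdef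
    have ht0 : 0 < t := Real.sqrt_pos.mpr hX0
    have ht2 : t ^ 2 = X := Real.sq_sqrt hX0.le
    have hX3 : 3 * (1 - s) * X = 4 * a := by
      rw [hXdef, ha]; field_simp
    set Y := (9/8) * X + a/2 with hYdef
    have hY0 : 0 < Y := by positivity
    clear_value X t Y
    have e3 : (1 - s) * Y = a * (4 - s) / 2 := by
      rw [hYdef]; linear_combination (3/8) * hX3
    have key : t < 3 * (k * Y) := by
      apply lt_of_pow_lt_pow_left₀ 2 (by positivity)
      rw [ht2]
      have hc : (0:ℝ) < 81 * a * (1 - s)^3 := by positivity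
      rw [← mul_lt_mul_iff_of_pos_right hc]
      have l1 : (3 * (k * Y))^2 * (81 * a * (1 - s)^3)
          = 27 * (1 - s^2) * (1 - s) * (a * (4 - s) / 2)^2 := by
        linear_combination (27 * Y^2 * (1-s)^3) * hk2
          + (27 * (1 - s^2) * (1-s) * ((1-s)*Y + a*(4-s)/2)) * e3
      have l2 : X * (81 * a * (1 - s)^3) = 108 * a^2 * (1 - s)^2 := by
        linear_combination (27 * a * (1-s)^2) * hX3
      rw [l1, l2]
      have hid : 27*(1-s^2)*(1-s)*(a*(4-s)/2)^2 - 108*a^2*(1-s)^2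
          = (27/4)*(a^2*(1-s)^2)*(s*(8-7*s+s^2)) := by ring
      have hp1 : 0 < s*(8-7*s+s^2) :=
        mul_pos hs0 (by linarith only [sq_nonneg s, hs1])
      have hp2 : 0 < (27/4)*(a^2*(1-s)^2)*(s*(8-7*s+s^2)) :=
        mul_pos (by positivity) hp1
      linarith only [hid, hp2]
    have e4 : (9/8) * t - r / (2 * t) = Y / t := by
      rw [hra, hYdef, ← ht2]
      field_simp
      ring
    rw [e4]
    have h5 : 1/3 < k * Y / t := by
      rw [lt_div_iff₀ ht0]; linarith only [key]
    have h6 : β * (1/3) < β * (k * Y / t) := mul_lt_mul_of_pos_left h5 hβ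
    have h7 : -(β * k) * (Y / t) + 1/3 * β = β * (1/3) - β * (k * Y / t) := by ring
    rw [h7]
    linarith only [h6]
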